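/- Let α > 0, a > 0, 0 < β₁ < 1, G > 0, L > 0, and let η > 0 satisfy η < 1/(2·√(α(1−β₁)(1+1/a))·G·L). If γ > 0 satisfies the quadratic equation 4β₁(1−β₁)G²L²·γ² + (1+a−β₁)·γ − α(1+a)(1+1/a)·η² = 0, then γ < 1/(4(1−β₁)G²L²). -/
import Mathlib


/-- Under the step-size condition `η < 1/(2·√(α(1−β₁)(1+1/a))·G·L)`, the positive root of
`4β₁(1−β₁)G²L²·γ² + (1+a−β₁)·γ − α(1+a)(1+1/a)·η² = 0` satisfies
`γ < 1/(4(1−β₁)G²L²)`. -/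
theorem quadratic_root_below_threshold (α a β₁ G L η γ : ℝ)
    (hα : 0 < α) (ha : 0 < a) (hβ0 : 0 < β₁) (hβ1 : β₁ < 1)
    (hG : 0 < G) (hL : 0 < L) (hη : 0 < η)
    (hηlt : η < 1 / (2 * Real.sqrt (α * (1 - β₁) * (1 + 1 / a)) * G * L))
    (hγ : 0 < γ)
    (heq : 4 * β₁ * (1 - β₁) * G ^ 2 * L ^ 2 * γ ^ 2 + (1 + a - β₁) * γ
      - α * (1 + a) * (1 + 1 / a) * η ^ 2 = 0) :
    γ < 1 / (4 * (1 - β₁) * G ^ 2 * L ^ 2) := by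
  set s : ℝ := α * (1 - β₁) * (1 + 1 / a) with hs_def
  have hβ : 0 < 1 - β₁ := by linarith
  have ha' : 0 < 1 + 1 / a := by positivity
  have hs : 0 < s := by rw [hs_def]; positivity
  have hsqrt : 0 < Real.sqrt s := Real.sqrt_pos.mpr hs
  have hden : 0 < 2 * Real.sqrt s * G * L := by positivity
  have h1 : η * (2 * Real.sqrt s * G * L) < 1 := by
    rw [← lt_div_iff₀ hden]; exact hηlt
  have hsq : Real.sqrt s ^ 2 = s := Real.sq_sqrt hs.le
  have h2 : (η * (2 * Real.sqrt s * G * L)) ^ 2 < 1 := by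
    nlinarith [mul_pos hη hden]
  have hη2 : η ^ 2 * (4 * s * G ^ 2 * L ^ 2) < 1 := by nlinarith [h2, hsq]
  have key : α * (1 + a) * (1 + 1 / a) * η ^ 2 * (4 * (1 - β₁) * G ^ 2 * L ^ 2)
      < 1 + a := by
    nlinarith [mul_lt_mul_of_pos_left hη2 (by linarith : (0:ℝ) < 1 + a)]
  by_contra hcon
  push_neg at hcon
  have hB : 0 < 4 * (1 - β₁) * G ^ 2 * L ^ 2 := by positivity
  have hu : 1 ≤ γ * (4 * (1 - β₁) * G ^ 2 * L ^ 2) := by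
    rw [div_le_iff₀ hB] at hcon
    linarith
  have h3 : (1 + a) * γ ≤ α * (1 + a) * (1 + 1 / a) * η ^ 2 := by
    linarith [mul_nonneg (mul_nonneg hβ0.le hγ.le) (sub_nonneg.mpr hu)]
  have h4 := mul_le_mul_of_nonneg_right h3 hB.le
  have h5 := mul_le_mul_of_nonneg_left hu (by linarith : (0:ℝ) ≤ 1 + a)
  linarith [key, h4, h5]
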